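/- Let γ be an uncountable cardinal and κ a cardinal with ℵ₀ < κ ≤ γ. Then any two Abelian groups of cardinality γ are κ-asymorphic. -/

import Mathlib

open Cardinal Pointwise

universe u

/-- A bijection `f : G ≃ H` between additive groups is a `κ`-asymorphism if for all
`X ∈ [G]^{<κ}` and `Y ∈ [H]^{<κ}` there are `X' ∈ [G]^{<κ}`, `Y' ∈ [H]^{<κ}` with
`f(X + x) ⊆ Y' + f x` for all `x ∈ G` and `f⁻¹(Y + y) ⊆ X' + f⁻¹ y` for all `y ∈ H`. -/
def IsAddAsymorphism {G H : Type u} [AddGroup G] [AddGroup H] (κ : Cardinal.{u})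
    (f : G ≃ H) : Prop :=
  ∀ X : Set G, ∀ Y : Set H, #X < κ → #Y < κ →
    ∃ X' : Set G, ∃ Y' : Set H, #X' < κ ∧ #Y' < κ ∧
      (∀ x : G, ⇑f '' (X + {x}) ⊆ Y' + {f x}) ∧
      (∀ y : H, ⇑f.symm '' (Y + {y}) ⊆ X' + {f.symm y})

namespace AsymProof

open Set

attribute [local instance] Classical.propDecidable

variable {G : Type u} [AddCommGroup G]

theorem mk_closure_le (S : Set G) : #(AddSubgroup.closure S) ≤ max #S ℵ₀ := by
  have h1 : (AddSubgroup.closure S : Set G) ⊆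
      List.sum '' { l : List G | ∀ x ∈ l, x ∈ S ∪ -S } := by
    intro x hx
    rw [SetLike.mem_coe, ← AddSubgroup.mem_toAddSubmonoid,
      AddSubgroup.closure_toAddSubmonoid] at hx
    obtain ⟨l, hl, rfl⟩ := AddSubmonoid.exists_list_of_mem_closure hx
    exact ⟨l, hl, rfl⟩
  have h2 : { l : List G | ∀ x ∈ l, x ∈ S ∪ -S } = Set.range (List.map ((↑) : (S ∪ -S : Set G) → G)) := by
    rw [Set.range_list_map_coe]
  have h3 : #(S ∪ -S : Set G) ≤ max #S ℵ₀ := by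
    calc #(S ∪ -S : Set G) ≤ #S + #(-S : Set G) := Cardinal.mk_union_le _ _
      _ ≤ #S + #S := by
          have : (-S : Set G) = (fun x => -x) '' S := by
            ext y
            simp only [Set.mem_neg, Set.mem_image]
            exact ⟨fun h => ⟨-y, h, by simp⟩, fun ⟨z, hz, hzy⟩ => by
              rw [← hzy]; simpa using hz⟩
          rw [this]
          exact add_le_add_right mk_image_le _
      _ ≤ max (max #S #S) ℵ₀ := Cardinal.add_le_max _ _
      _ = max #S ℵ₀ := by rw [max_self]
  calc #(AddSubgroup.closure S) ≤ #(List.sum '' { l : List G | ∀ x ∈ l, x ∈ S ∪ -S }) :=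
        mk_le_mk_of_subset h1
    _ ≤ #{ l : List G | ∀ x ∈ l, x ∈ S ∪ -S } := mk_image_le
    _ ≤ #(List (S ∪ -S : Set G)) := by rw [h2]; exact mk_range_le
    _ ≤ max #(S ∪ -S : Set G) ℵ₀ := by
        rcases isEmpty_or_nonempty (S ∪ -S : Set G) with h | h
        · exact le_max_of_le_right (Cardinal.mk_le_aleph0)
        · rw [Cardinal.mk_list_eq_max_mk_aleph0]
    _ ≤ max (max #S ℵ₀) ℵ₀ := by exact max_le_max_right _ h3
    _ = max #S ℵ₀ := by rw [max_assoc, max_self]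

theorem countable_closure {S : Set G} (hS : S.Countable) :
    Countable (AddSubgroup.closure S) := by
  rw [← Cardinal.mk_le_aleph0_iff]
  refine (mk_closure_le S).trans ?_
  rw [max_le_iff]
  exact ⟨Cardinal.mk_le_aleph0_iff.mpr (Set.countable_coe_iff.mpr hS), le_rfl⟩


variable {H : Type u} [AddCommGroup H]

/-- quotient map -/
noncomputable abbrev qmk (A : AddSubgroup G) : G →+ G ⧸ A := QuotientAddGroup.mk' A

/-- the image of the `β+1`-st stage in the quotient by the `β`-th stage -/
noncomputable def lay (A : Ordinal.{u} → AddSubgroup G) (β : Ordinal.{u}) :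
    AddSubgroup (G ⧸ A β) := (A (β + 1)).map (qmk (A β))

/-- level of an element -/
noncomputable def lv (A : Ordinal.{u} → AddSubgroup G) (x : G) : Ordinal.{u} :=
  sInf {δ | x ∈ A (δ + 1)}

section chain

variable (A : Ordinal.{u} → AddSubgroup G)

theorem lv_le {x : G} {δ : Ordinal.{u}} (h : x ∈ A (δ + 1)) : lv A x ≤ δ := csInf_le' h

/-- exhaustiveness of a chain -/
def ChainEx (A : Ordinal.{u} → AddSubgroup G) : Prop := ∀ x : G, ∃ β : Ordinal.{u}, x ∈ A (β + 1)

/-- descent property of a chain -/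
def ChainDesc (A : Ordinal.{u} → AddSubgroup G) : Prop :=
  ∀ β (x : G), x ∈ A β → x ≠ 0 → ∃ δ : Ordinal.{u}, δ < β ∧ x ∈ A (δ + 1)

theorem lv_mem (hEx : ChainEx A) (x : G) : x ∈ A (lv A x + 1) := csInf_mem (hEx x)

theorem lv_lt_of_mem (hDesc : ChainDesc A) {x : G} {β : Ordinal.{u}} (h : x ∈ A β) (hx : x ≠ 0) : lv A x < β := by
  obtain ⟨δ, hδ, hm⟩ := hDesc β x h hx
  exact (lv_le A hm).trans_lt hδ

theorem not_mem_lv (hDesc : ChainDesc A) {x : G} (hx : x ≠ 0) : x ∉ A (lv A x) :=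
  fun h => (lv_lt_of_mem A hDesc h hx).false

theorem lv_zero_mem {β : Ordinal.{u}} : (0 : G) ∈ A (β + 1) := zero_mem _

theorem mem_lay_of_mem {x : G} {β : Ordinal.{u}} (h : x ∈ A (β + 1)) :
    qmk (A β) x ∈ lay A β := AddSubgroup.mem_map.mpr ⟨x, h, rfl⟩

theorem mem_of_qmk_zero {x : G} {β : Ordinal.{u}} (h : qmk (A β) x = 0) : x ∈ A β := by
  rwa [← QuotientAddGroup.ker_mk' (A β), AddMonoidHom.mem_ker]

theorem qmk_zero_of_mem {x : G} {β : Ordinal.{u}} (h : x ∈ A β) : qmk (A β) x = 0 := by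
  rwa [← AddMonoidHom.mem_ker, QuotientAddGroup.ker_mk' (A β)]

/-- a section of the quotient map, defined on `lay`, sending `0` to `0`,
with values in `A (β+1)`. -/
noncomputable def sec (β : Ordinal.{u}) (q : G ⧸ A β) : G :=
  if h : q ∈ lay A β ∧ q ≠ 0 then (AddSubgroup.mem_map.mp h.1).choose else 0

theorem sec_zero (β : Ordinal.{u}) : sec A β 0 = 0 := by
  rw [sec, dif_neg]; simp

theorem sec_mem {β : Ordinal.{u}} {q : G ⧸ A β} (h : q ∈ lay A β) :
    sec A β q ∈ A (β + 1) := by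
  rcases eq_or_ne q 0 with rfl | hq
  · rw [sec_zero]; exact zero_mem _
  · rw [sec, dif_pos ⟨h, hq⟩]
    exact (AddSubgroup.mem_map.mp h).choose_spec.1

theorem qmk_sec {β : Ordinal.{u}} {q : G ⧸ A β} (h : q ∈ lay A β) :
    qmk (A β) (sec A β q) = q := by
  rcases eq_or_ne q 0 with rfl | hq
  · rw [sec_zero]; exact map_zero _
  · rw [sec, dif_pos ⟨h, hq⟩]
    exact (AddSubgroup.mem_map.mp h).choose_spec.2

/-- representative of the coset of `x` -/
noncomputable def rho (β : Ordinal.{u}) (x : G) : G := sec A β (qmk (A β) x)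

theorem rho_mem {β : Ordinal.{u}} {x : G} (h : x ∈ A (β + 1)) :
    rho A β x ∈ A (β + 1) := sec_mem A (mem_lay_of_mem A h)

theorem sub_rho_mem {β : Ordinal.{u}} {x : G} (h : x ∈ A (β + 1)) :
    x - rho A β x ∈ A β := by
  apply mem_of_qmk_zero
  rw [map_sub, rho, qmk_sec A (mem_lay_of_mem A h), sub_self]

theorem rho_of_mem {β : Ordinal.{u}} {x : G} (h : x ∈ A β) : rho A β x = 0 := by
  rw [rho, qmk_zero_of_mem A h, sec_zero]

end chain


theorem add_one_le_of_lt {a b : Ordinal.{u}} (h : a < b) : a + 1 ≤ b := by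
  rw [Ordinal.add_one_eq_succ]; exact Order.succ_le_of_lt h

theorem lv_induction (A : Ordinal.{u} → AddSubgroup G) {P : G → Prop}
    (h : ∀ x, (∀ y : G, lv A y < lv A x → P y) → P x) (x : G) : P x :=
  (InvImage.wf (lv A) (wellFounded_lt)).induction x h

section pair

variable (A : Ordinal.{u} → AddSubgroup G) (B : Ordinal.{u} → AddSubgroup H)

/-- transfer of a coset, via the matching `e` of layers -/
noncomputable def sigQ (e : ∀ β, ↥(lay A β) ≃ ↥(lay B β)) (β : Ordinal.{u}) (q : G ⧸ A β) : H :=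
  if h : q ∈ lay A β then sec B β ((e β ⟨q, h⟩ : lay B β) : H ⧸ B β) else 0

/-- transfer of the coset of an element -/
noncomputable def sig (e : ∀ β, ↥(lay A β) ≃ ↥(lay B β)) (β : Ordinal.{u}) (x : G) : H :=
  sigQ A B e β (qmk (A β) x)

variable (e : ∀ β, ↥(lay A β) ≃ ↥(lay B β))

theorem sigQ_zero (he0 : ∀ β, e β 0 = 0) (β : Ordinal.{u}) : sigQ A B e β 0 = 0 := by
  rw [sigQ, dif_pos (zero_mem (lay A β))]
  have : (⟨0, zero_mem (lay A β)⟩ : ↥(lay A β)) = 0 := rfl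
  rw [this, he0 β]
  exact sec_zero B β

theorem sig_mem {β : Ordinal.{u}} {x : G} (h : x ∈ A (β + 1)) :
    sig A B e β x ∈ B (β + 1) := by
  rw [sig, sigQ, dif_pos (mem_lay_of_mem A h)]
  exact sec_mem B (e β ⟨qmk (A β) x, mem_lay_of_mem A h⟩).2

theorem sig_mem_image {β : Ordinal.{u}} {x : G} (h : x ∈ A (β + 1)) :
    sig A B e β x ∈ sec B β '' (lay B β : Set (H ⧸ B β)) := by
  rw [sig, sigQ, dif_pos (mem_lay_of_mem A h)]
  exact ⟨_, (e β ⟨qmk (A β) x, mem_lay_of_mem A h⟩).2, rfl⟩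

theorem sig_of_mem (he0 : ∀ β, e β 0 = 0) {β : Ordinal.{u}} {x : G} (h : x ∈ A β) :
    sig A B e β x = 0 := by
  rw [sig, qmk_zero_of_mem A h, sigQ_zero A B e he0 β]

theorem qmk_sig {β : Ordinal.{u}} {x : G} (h : x ∈ A (β + 1)) :
    qmk (B β) (sig A B e β x) =
      ((e β ⟨qmk (A β) x, mem_lay_of_mem A h⟩ : ↥(lay B β)) : H ⧸ B β) := by
  rw [sig, sigQ, dif_pos (mem_lay_of_mem A h)]
  exact qmk_sec B (e β ⟨qmk (A β) x, mem_lay_of_mem A h⟩).2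

theorem lv_sub_rho_lt (hEx : ChainEx A) (hDesc : ChainDesc A) {x : G}
    (hy : x - rho A (lv A x) x ≠ 0) : lv A (x - rho A (lv A x) x) < lv A x :=
  lv_lt_of_mem A hDesc (sub_rho_mem A (lv_mem A hEx x)) hy

/-- the asymorphism -/
noncomputable def amap (hEx : ChainEx A) (hDesc : ChainDesc A) : G → H :=
  WellFounded.fix (InvImage.wf (lv A) (wellFounded_lt : WellFounded ((· < ·) : Ordinal.{u} → Ordinal.{u} → Prop)))
    fun x rec =>
      if _hx : x = 0 then 0
      else
        sig A B e (lv A x) x +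
          if hy : x - rho A (lv A x) x = 0 then 0
          else rec _ (lv_sub_rho_lt A hEx hDesc hy)

variable (hEx : ChainEx A) (hDesc : ChainDesc A)

theorem amap_zero : amap A B e hEx hDesc 0 = 0 := by
  rw [amap, WellFounded.fix_eq]
  simp

theorem amap_def (x : G) :
    amap A B e hEx hDesc x = if x = 0 then 0 else
      sig A B e (lv A x) x + amap A B e hEx hDesc (x - rho A (lv A x) x) := by
  conv_lhs => rw [amap, WellFounded.fix_eq]
  rcases eq_or_ne x 0 with rfl | hx
  · simp
  · rw [dif_neg hx, if_neg hx]
    congr 1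
    rcases eq_or_ne (x - rho A (lv A x) x) 0 with h0 | h0
    · rw [dif_pos h0, h0, amap_zero]
    · rw [dif_neg h0]
      rfl

theorem amap_step (hMono : Monotone A) (he0 : ∀ β, e β 0 = 0) {β : Ordinal.{u}} {x : G}
    (hx : x ∈ A (β + 1)) :
    amap A B e hEx hDesc x = sig A B e β x + amap A B e hEx hDesc (x - rho A β x) := by
  rcases eq_or_ne x 0 with rfl | hx0
  · rw [sig_of_mem A B e he0 (zero_mem _), rho_of_mem A (zero_mem _)]
    simp [amap_zero]
  by_cases hm : x ∈ A β
  · rw [sig_of_mem A B e he0 hm, rho_of_mem A hm]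
    simp
  · have hlv : lv A x = β := by
      refine le_antisymm (lv_le A hx) ?_
      by_contra hlt
      push_neg at hlt
      exact hm (hMono (add_one_le_of_lt hlt) (lv_mem A hEx x))
    rw [amap_def A B e hEx hDesc x, if_neg hx0, hlv]

theorem amap_mem (hMono : Monotone A) (hMonoB : Monotone B) (he0 : ∀ β, e β 0 = 0) (x : G) :
    ∀ α : Ordinal.{u}, x ∈ A α → amap A B e hEx hDesc x ∈ B α := by
  induction x using lv_induction A with
  | h x IH =>
    intro α hx
    rcases eq_or_ne x 0 with rfl | hx0
    · rw [amap_zero]; exact zero_mem _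
    · have hβα : lv A x < α := lv_lt_of_mem A hDesc hx hx0
      have hx1 : x ∈ A (lv A x + 1) := lv_mem A hEx x
      rw [amap_step A B e hEx hDesc hMono he0 hx1]
      apply add_mem
      · exact hMonoB (add_one_le_of_lt hβα) (sig_mem A B e hx1)
      · set y := x - rho A (lv A x) x with hy
        have hymem : y ∈ A (lv A x) := sub_rho_mem A hx1
        rcases eq_or_ne y 0 with h0 | h0
        · rw [h0, amap_zero]; exact zero_mem _
        · exact IH y (lv_lt_of_mem A hDesc hymem h0) α (hMono hβα.le hymem)


theorem sigQ_symm_eq {β : Ordinal.{u}} (w : ↥(lay A β)) (q : H ⧸ B β)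
    (hq : q = ((e β w : ↥(lay B β)) : H ⧸ B β)) :
    sigQ B A (fun δ => (e δ).symm) β q = sec A β (w : G ⧸ A β) := by
  subst hq
  rw [sigQ, dif_pos (e β w).2]
  congr 1
  have h1 : (⟨((e β w : ↥(lay B β)) : H ⧸ B β), (e β w).2⟩ : ↥(lay B β)) = e β w :=
    Subtype.ext rfl
  rw [h1, Equiv.symm_apply_apply]

theorem bmap_amap (hMonoA : Monotone A) (hMonoB : Monotone B) (he0 : ∀ β, e β 0 = 0)
    (hExB : ChainEx B) (hDescB : ChainDesc B) (x : G) :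
    amap B A (fun β => (e β).symm) hExB hDescB (amap A B e hEx hDesc x) = x := by
  have he0' : ∀ β, (e β).symm 0 = 0 := fun β => by
    rw [← he0 β, Equiv.symm_apply_apply]
  induction x using lv_induction A with
  | h x IH =>
    rcases eq_or_ne x 0 with rfl | hx0
    · rw [amap_zero, amap_zero]
    · set β := lv A x with hβdef
      have hx1 : x ∈ A (β + 1) := lv_mem A hEx x
      set y := x - rho A β x with hydef
      have hstep : amap A B e hEx hDesc x = sig A B e β x + amap A B e hEx hDesc y :=
        amap_step A B e hEx hDesc hMonoA he0 hx1
      have hymem : y ∈ A β := sub_rho_mem A hx1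
      have hay : amap A B e hEx hDesc y ∈ B β :=
        amap_mem A B e hEx hDesc hMonoA hMonoB he0 y β hymem
      have hqa : qmk (B β) (amap A B e hEx hDesc x) =
          ((e β ⟨qmk (A β) x, mem_lay_of_mem A hx1⟩ : ↥(lay B β)) : H ⧸ B β) := by
        rw [hstep, map_add, qmk_sig A B e hx1, qmk_zero_of_mem B hay, add_zero]
      have hax1 : amap A B e hEx hDesc x ∈ B (β + 1) :=
        amap_mem A B e hEx hDesc hMonoA hMonoB he0 x (β + 1) hx1
      rw [amap_step B A (fun δ => (e δ).symm) hExB hDescB hMonoB he0' hax1]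
      have hσ' : sig B A (fun δ => (e δ).symm) β (amap A B e hEx hDesc x) = rho A β x := by
        rw [sig, sigQ_symm_eq A B e ⟨qmk (A β) x, mem_lay_of_mem A hx1⟩ _ hqa]
        rfl
      have hρ' : rho B β (amap A B e hEx hDesc x) = sig A B e β x := by
        rw [rho, hqa, sig, sigQ, dif_pos (mem_lay_of_mem A hx1)]
      rw [hσ', hρ']
      have hsub : amap A B e hEx hDesc x - sig A B e β x = amap A B e hEx hDesc y := by
        rw [hstep]; abel
      rw [hsub]
      rcases eq_or_ne y 0 with h0 | h0
      · rw [h0, amap_zero, amap_zero, add_zero]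
        have := sub_eq_zero.mp (hydef ▸ h0)
        exact this.symm
      · rw [IH y (lv_lt_of_mem A hDesc hymem h0), hydef]
        abel

theorem amap_translate (hMonoA : Monotone A) (he0 : ∀ β, e β 0 = 0) {α : Ordinal.{u}}
    {a : G} (ha : a ∈ A α) (x : G) :
    ∃ u, u ∈ A α ∧ amap A B e hEx hDesc (x + a) - amap A B e hEx hDesc x =
      amap A B e hEx hDesc (u + a) - amap A B e hEx hDesc u := by
  induction x using lv_induction A with
  | h x IH =>
    by_cases hm : x ∈ A α
    · exact ⟨x, hm, rfl⟩
    · have hx0 : x ≠ 0 := fun h => hm (h ▸ zero_mem _)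
      set β := lv A x with hβdef
      have hαβ : α ≤ β := by
        by_contra hlt
        push_neg at hlt
        exact hm (hMonoA (add_one_le_of_lt hlt) (lv_mem A hEx x))
      have haβ : a ∈ A β := hMonoA hαβ ha
      have hx1 : x ∈ A (β + 1) := lv_mem A hEx x
      have hxa1 : x + a ∈ A (β + 1) := add_mem hx1 (hMonoA (by rw [Ordinal.add_one_eq_succ]; exact Order.le_succ β) haβ)
      rw [amap_step A B e hEx hDesc hMonoA he0 hxa1, amap_step A B e hEx hDesc hMonoA he0 hx1]
      have hqeq : qmk (A β) (x + a) = qmk (A β) x := by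
        rw [map_add, qmk_zero_of_mem A haβ, add_zero]
      have hsig : sig A B e β (x + a) = sig A B e β x := by rw [sig, sig, hqeq]
      have hrho : rho A β (x + a) = rho A β x := by rw [rho, rho, hqeq]
      rw [hsig, hrho]
      set y := x - rho A β x with hydef
      have h1 : x + a - rho A β x = y + a := by rw [hydef]; abel
      rw [h1, add_sub_add_left_eq_sub]
      by_cases hym : y ∈ A α
      · exact ⟨y, hym, rfl⟩
      · have hy0 : y ≠ 0 := fun h => hym (h ▸ zero_mem _)
        exact IH y (lv_lt_of_mem A hDesc (sub_rho_mem A hx1) hy0)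

/-- displacement set of a translation -/
def Dset (a : G) : Set H :=
  {d | ∃ x : G, d = amap A B e hEx hDesc (x + a) - amap A B e hEx hDesc x}

theorem countable_Dset_zero : (Dset A B e hEx hDesc 0).Countable := by
  refine (Set.countable_singleton 0).mono ?_
  rintro d ⟨x, rfl⟩
  simp

theorem countable_Dset (hMonoA : Monotone A) (he0 : ∀ β, e β 0 = 0)
    (hlayA : ∀ β, Countable (lay A β)) (hlayB : ∀ β, Countable (lay B β)) (a : G) :
    (Dset A B e hEx hDesc a).Countable := by
  induction a using lv_induction A with
  | h a IH =>
    rcases eq_or_ne a 0 with rfl | ha0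
    · exact countable_Dset_zero A B e hEx hDesc
    · set β := lv A a with hβdef
      have ha1 : a ∈ A (β + 1) := lv_mem A hEx a
      have hSA : (sec A β '' (lay A β : Set (G ⧸ A β))).Countable :=
        ((Set.countable_coe_iff.mp (hlayA β)).image _)
      have hSB : (sec B β '' (lay B β : Set (H ⧸ B β))).Countable :=
        ((Set.countable_coe_iff.mp (hlayB β)).image _)
      set SA := sec A β '' (lay A β : Set (G ⧸ A β)) with hSAdef
      set SB := sec B β '' (lay B β : Set (H ⧸ B β)) with hSBdef
      set C : Set G := {c | (∃ t1 ∈ SA, ∃ t2 ∈ SA, c = a + t1 - t2) ∧ c ∈ A β} with hCdef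
      have hC : C.Countable := by
        refine ((hSA.image2 hSA (fun t1 t2 => a + t1 - t2)).mono ?_)
        rintro c ⟨⟨t1, ht1, t2, ht2, rfl⟩, -⟩
        exact Set.mem_image2_of_mem ht1 ht2
      have hCD : (⋃ c ∈ C, Dset A B e hEx hDesc c).Countable := by
        refine hC.biUnion fun c hc => ?_
        rcases eq_or_ne c 0 with rfl | hc0
        · exact countable_Dset_zero A B e hEx hDesc
        · exact IH c (lv_lt_of_mem A hDesc hc.2 hc0)
      refine (((hSB.image2 hSB (fun p q => p - q)).image2 hCD (fun p q => p + q)).mono ?_)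
      rintro d ⟨x, rfl⟩
      obtain ⟨u, hu, heq⟩ := amap_translate A B e hEx hDesc hMonoA he0 ha1 x
      have hua1 : u + a ∈ A (β + 1) := add_mem hu ha1
      rw [heq, amap_step A B e hEx hDesc hMonoA he0 hua1,
        amap_step A B e hEx hDesc hMonoA he0 hu]
      set v := u - rho A β u with hvdef
      set c := a + rho A β u - rho A β (u + a) with hcdef
      have h2 : u + a - rho A β (u + a) = v + c := by rw [hvdef, hcdef]; abel
      rw [h2]
      have hcC : c ∈ C := by
        constructor
        · refine ⟨rho A β u, ?_, rho A β (u + a), ?_, rfl⟩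
          · exact ⟨qmk (A β) u, mem_lay_of_mem A hu, rfl⟩
          · exact ⟨qmk (A β) (u + a), mem_lay_of_mem A hua1, rfl⟩
        · have hvc : v + c ∈ A β := h2 ▸ sub_rho_mem A hua1
          have hv : v ∈ A β := sub_rho_mem A hu
          have : c = (v + c) - v := by abel
          rw [this]
          exact sub_mem hvc hv
      have hmemD : amap A B e hEx hDesc (v + c) - amap A B e hEx hDesc v ∈
          ⋃ c' ∈ C, Dset A B e hEx hDesc c' :=
        Set.mem_biUnion hcC ⟨v, rfl⟩
      have habel : sig A B e β (u + a) + amap A B e hEx hDesc (v + c) -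
          (sig A B e β u + amap A B e hEx hDesc v) =
          (fun p q => p + q) ((fun p q => p - q) (sig A B e β (u + a)) (sig A B e β u))
            (amap A B e hEx hDesc (v + c) - amap A B e hEx hDesc v) := by
        show _ = _ + _
        beta_reduce
        abel
      rw [habel]
      exact Set.mem_image2_of_mem (Set.mem_image2_of_mem (sig_mem_image A B e hua1)
        (sig_mem_image A B e hu)) hmemD

end pair


/-- countably many quotient representatives, if the quotient is infinite -/
noncomputable def pick (K : AddSubgroup G) : Set G :=
  if h : Infinite (G ⧸ K) then
    Set.range (fun n : ℕ => (@Infinite.natEmbedding (G ⧸ K) h n).out) else ∅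

theorem countable_pick (K : AddSubgroup G) : (pick K).Countable := by
  rw [pick]
  split_ifs with h
  · exact Set.countable_range _
  · exact Set.countable_empty

/-- generating set added at a step -/
noncomputable def stepset (v : G) (K : AddSubgroup G) : Set G := insert v (pick K) ∪ ↑K

theorem mk_stepset_le (v : G) (K : AddSubgroup G) :
    #(stepset v K) ≤ max #(K : Set G) ℵ₀ := by
  calc #(stepset v K) ≤ #(insert v (pick K) : Set G) + #(K : Set G) := mk_union_le _ _
    _ ≤ (ℵ₀ + #(K : Set G)) := by
        gcongr
        · refine le_trans (mk_insert_le) ?_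
          have : #(pick K) ≤ ℵ₀ := (countable_pick K).le_aleph0
          calc #(pick K) + 1 ≤ ℵ₀ + 1 := by gcongr
            _ = ℵ₀ := by simp
    _ ≤ max (max ℵ₀ #(K : Set G)) ℵ₀ := Cardinal.add_le_max _ _
    _ ≤ max #(K : Set G) ℵ₀ := by
        rw [max_comm ℵ₀ #(K : Set G), max_assoc, max_self]

/-- the chain of subgroups generated along an enumeration -/
noncomputable def chain (g : Ordinal.{u} → G) : Ordinal.{u} → AddSubgroup G :=
  WellFounded.fix (wellFounded_lt : WellFounded ((· < ·) : Ordinal.{u} → Ordinal.{u} → Prop))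
    fun α rec =>
      AddSubgroup.closure (⋃ i : α.ToType,
        stepset (g ((@Ordinal.ToType.mk α).symm i).1)
          (rec ((@Ordinal.ToType.mk α).symm i).1 ((@Ordinal.ToType.mk α).symm i).2))

theorem chain_eq (g : Ordinal.{u} → G) (α : Ordinal.{u}) :
    chain g α = AddSubgroup.closure (⋃ i : α.ToType,
      stepset (g ((@Ordinal.ToType.mk α).symm i).1)
        (chain g ((@Ordinal.ToType.mk α).symm i).1)) := by
  conv_lhs => rw [chain, WellFounded.fix_eq]
  rfl

theorem iUnion_toType_eq (g : Ordinal.{u} → G) (α : Ordinal.{u}) :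
    (⋃ i : α.ToType,
      stepset (g ((@Ordinal.ToType.mk α).symm i).1)
        (chain g ((@Ordinal.ToType.mk α).symm i).1)) =
    ⋃ β : Ordinal.{u}, ⋃ _ : β < α, stepset (g β) (chain g β) := by
  ext x
  simp only [Set.mem_iUnion]
  constructor
  · rintro ⟨i, hi⟩
    exact ⟨_, ((@Ordinal.ToType.mk α).symm i).2, hi⟩
  · rintro ⟨β, hβ, hx⟩
    refine ⟨(@Ordinal.ToType.mk α) ⟨β, hβ⟩, ?_⟩
    rwa [OrderIso.symm_apply_apply]

theorem chain_eq' (g : Ordinal.{u} → G) (α : Ordinal.{u}) :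
    chain g α = AddSubgroup.closure
      (⋃ β : Ordinal.{u}, ⋃ _ : β < α, stepset (g β) (chain g β)) := by
  rw [chain_eq, iUnion_toType_eq]

theorem stepset_subset_chain {g : Ordinal.{u} → G} {β α : Ordinal.{u}} (h : β < α) :
    stepset (g β) (chain g β) ⊆ (chain g α : Set G) := by
  have h2 : (⋃ β' : Ordinal.{u}, ⋃ _ : β' < α, stepset (g β') (chain g β')) ⊆
      (chain g α : Set G) := by
    rw [chain_eq' g α]
    exact AddSubgroup.subset_closure
  exact (Set.subset_iUnion₂ (s := fun β' (_ : β' < α) => stepset (g β') (chain g β')) β h).trans h2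

theorem chain_mono (g : Ordinal.{u} → G) : Monotone (chain g) := by
  intro β α hβα
  rcases eq_or_lt_of_le hβα with rfl | h
  · exact le_rfl
  · intro x hx
    exact stepset_subset_chain h (Set.mem_union_right _ hx)

theorem self_mem_chain (g : Ordinal.{u} → G) (β : Ordinal.{u}) : g β ∈ chain g (β + 1) := by
  have h : β < β + 1 := by
    rw [Ordinal.add_one_eq_succ]; exact Order.lt_succ β
  exact stepset_subset_chain h (Set.mem_union_left _ (Set.mem_insert _ _))

theorem chain_desc (g : Ordinal.{u} → G) :
    ∀ α (x : G), x ∈ chain g α → x ≠ 0 → ∃ δ : Ordinal.{u}, δ < α ∧ x ∈ chain g (δ + 1) := by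
  intro α x hx hx0
  have hle : chain g α ≤ ⨆ δ : Set.Iio α, chain g (δ.1 + 1) := by
    rw [chain_eq']
    apply AddSubgroup.closure_le _ |>.mpr
    intro y hy
    rw [Set.mem_iUnion] at hy
    obtain ⟨β, hy⟩ := hy
    rw [Set.mem_iUnion] at hy
    obtain ⟨hβ, hy⟩ := hy
    have h1 : β < β + 1 := by rw [Ordinal.add_one_eq_succ]; exact Order.lt_succ β
    have : y ∈ chain g (β + 1) := stepset_subset_chain h1 hy
    exact SetLike.le_def.mp (le_iSup (fun δ : Set.Iio α => chain g (δ.1 + 1)) ⟨β, hβ⟩) this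
  rcases eq_or_ne α 0 with rfl | hne0
  · exfalso
    apply hx0
    have hbot : chain g (0 : Ordinal.{u}) = ⊥ := by
      rw [chain_eq' g 0]
      have : (⋃ β : Ordinal.{u}, ⋃ _ : β < (0 : Ordinal.{u}), stepset (g β) (chain g β)) =
          (∅ : Set G) := by
        simp [not_lt_zero']
      rw [this, AddSubgroup.closure_empty]
    rw [hbot] at hx
    exact AddSubgroup.mem_bot.mp hx
  · have hne : Nonempty (Set.Iio α) := ⟨⟨0, pos_iff_ne_zero.mpr hne0⟩⟩
    have hdir : Directed (· ≤ ·) (fun δ : Set.Iio α => chain g (δ.1 + 1)) := by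
      apply Monotone.directed_le
      intro i j hij
      exact chain_mono g (by
        have : i.1 ≤ j.1 := hij
        exact add_le_add_left this 1)
    obtain ⟨⟨δ, hδ⟩, hmem⟩ := (AddSubgroup.mem_iSup_of_directed hdir).mp (hle hx)
    exact ⟨δ, hδ, hmem⟩

theorem mk_chain_le (g : Ordinal.{u} → G) :
    ∀ α : Ordinal.{u}, #(chain g α) ≤ max α.card ℵ₀ := by
  intro α
  induction α using Ordinal.induction with
  | h α IH =>
    rw [chain_eq]
    refine le_trans (mk_closure_le _) ?_
    have hU : #(⋃ i : α.ToType,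
        stepset (g ((@Ordinal.ToType.mk α).symm i).1)
          (chain g ((@Ordinal.ToType.mk α).symm i).1)) ≤ max α.card ℵ₀ := by
      refine le_trans (mk_iUnion_le _) ?_
      have h1 : #α.ToType = α.card := Cardinal.mk_toType α
      have h2 : (⨆ i : α.ToType, #(stepset (g ((@Ordinal.ToType.mk α).symm i).1)
          (chain g ((@Ordinal.ToType.mk α).symm i).1))) ≤ max α.card ℵ₀ := by
        refine ciSup_le' fun i => ?_
        set β := ((@Ordinal.ToType.mk α).symm i).1 with hβdef
        have hβ : β < α := ((@Ordinal.ToType.mk α).symm i).2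
        refine le_trans (mk_stepset_le _ _) ?_
        have h3 : #(chain g β : Set G) ≤ max β.card ℵ₀ := IH β hβ
        refine max_le (h3.trans ?_) (le_max_right _ _)
        exact max_le_max_right _ (Ordinal.card_le_card hβ.le)
      calc #α.ToType * (⨆ i : α.ToType, _) ≤ α.card * max α.card ℵ₀ := by
            rw [h1]; exact mul_le_mul_right h2 _
        _ ≤ max (max α.card (max α.card ℵ₀)) ℵ₀ := Cardinal.mul_le_max _ _
        _ ≤ max α.card ℵ₀ := by
            apply max_le _ (le_max_right _ _)
            exact max_le (le_max_left _ _) le_rfl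
    exact max_le hU (le_max_right _ _)



section layers

variable (γ : Cardinal.{u}) (g : Ordinal.{u} → G)

theorem chain_top (hg : ∀ x : G, ∃ β < γ.ord, g β = x) {α : Ordinal.{u}} (hα : γ.ord ≤ α) :
    chain g α = ⊤ := by
  rw [eq_top_iff]
  intro x _
  obtain ⟨β, hβ, rfl⟩ := hg x
  exact chain_mono g (add_one_le_of_lt (hβ.trans_le hα)) (self_mem_chain g β)

theorem chainEx_chain (hg : ∀ x : G, ∃ β < γ.ord, g β = x) : ChainEx (chain g) := fun x => by
  obtain ⟨β, _, rfl⟩ := hg x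
  exact ⟨β, self_mem_chain g β⟩

theorem lay_chain_le (β : Ordinal.{u}) :
    lay (chain g) β ≤ AddSubgroup.closure
      (insert (qmk (chain g β) (g β))
        ((qmk (chain g β)) '' pick (chain g β) ∪ {0})) := by
  rw [lay]
  have h1 : chain g (β + 1) = AddSubgroup.closure
      (⋃ δ : Ordinal.{u}, ⋃ _ : δ < β + 1, stepset (g δ) (chain g δ)) := chain_eq' g (β + 1)
  rw [h1, AddMonoidHom.map_closure]
  apply AddSubgroup.closure_mono
  rintro y ⟨z, hz, rfl⟩
  rw [Set.mem_iUnion] at hz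
  obtain ⟨δ, hz⟩ := hz
  rw [Set.mem_iUnion] at hz
  obtain ⟨hδ, hz⟩ := hz
  have hδβ : δ ≤ β := by
    rw [Ordinal.add_one_eq_succ] at hδ
    exact Order.lt_succ_iff.mp hδ
  rcases eq_or_lt_of_le hδβ with rfl | hlt
  · rcases hz with hz | hz
    · rcases Set.mem_insert_iff.mp hz with rfl | hz
      · exact Set.mem_insert _ _
      · exact Set.mem_insert_iff.mpr (Or.inr (Or.inl ⟨z, hz, rfl⟩))
    · refine Set.mem_insert_iff.mpr (Or.inr (Or.inr ?_))
      rw [Set.mem_singleton_iff]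
      exact qmk_zero_of_mem _ hz
  · have hzmem : z ∈ chain g β := stepset_subset_chain hlt hz
    refine Set.mem_insert_iff.mpr (Or.inr (Or.inr ?_))
    rw [Set.mem_singleton_iff]
    exact qmk_zero_of_mem _ hzmem

theorem lay_chain_countable (β : Ordinal.{u}) : Countable ↥(lay (chain g) β) := by
  have hS : (insert (qmk (chain g β) (g β))
      ((qmk (chain g β)) '' pick (chain g β) ∪ {0})).Countable :=
    (((countable_pick _).image _).union (Set.countable_singleton _)).insert _
  have h2 := countable_closure hS
  have h3 := lay_chain_le g β
  have h2' : ((AddSubgroup.closure (insert (qmk (chain g β) (g β))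
      ((qmk (chain g β)) '' pick (chain g β) ∪ {0}))
      : AddSubgroup (G ⧸ chain g β)) : Set (G ⧸ chain g β)).Countable :=
    Set.countable_coe_iff.mp h2
  exact Set.countable_coe_iff.mpr (h2'.mono h3)

theorem lay_chain_eq_aleph0 (hγ : ℵ₀ < γ) (hG : #G = γ) (hg : ∀ x : G, ∃ β < γ.ord, g β = x)
    {β : Ordinal.{u}} (hβ : β < γ.ord) : #↥(lay (chain g) β) = ℵ₀ := by
  set K := chain g β with hK
  have hKlt : #↥K < γ := by
    refine lt_of_le_of_lt (mk_chain_le g β) ?_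
    exact max_lt (Cardinal.lt_ord.mp hβ) hγ
  have hQ : Infinite (G ⧸ K) := by
    rw [Cardinal.infinite_iff]
    by_contra hlt
    push_neg at hlt
    have heq : #G = #(G ⧸ K) * #↥K := by
      rw [Cardinal.mk_congr (AddSubgroup.addGroupEquivQuotientProdAddSubgroup (s := K)),
        Cardinal.mk_prod, Cardinal.lift_id, Cardinal.lift_id]
    have : #G < γ := by
      rw [heq]
      exact Cardinal.mul_lt_of_lt hγ.le (hlt.trans hγ) hKlt
    exact absurd hG this.ne
  refine le_antisymm (Cardinal.mk_le_aleph0_iff.mpr (lay_chain_countable g β)) ?_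
  rw [Cardinal.aleph0_le_mk_iff]
  set emb := @Infinite.natEmbedding (G ⧸ K) hQ with hemb
  have hpick : ∀ n : ℕ, (emb n).out ∈ pick K := by
    intro n
    rw [pick, dif_pos hQ]
    exact ⟨n, rfl⟩
  have hmem : ∀ n : ℕ, qmk K ((emb n).out) ∈ lay (chain g) β := by
    intro n
    refine AddSubgroup.mem_map.mpr ⟨(emb n).out, ?_, rfl⟩
    have h1 : β < β + 1 := by rw [Ordinal.add_one_eq_succ]; exact Order.lt_succ β
    exact stepset_subset_chain h1 (Set.mem_union_left _ (Set.mem_insert_iff.mpr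
      (Or.inr (hpick n))))
  have hout : ∀ n : ℕ, qmk K ((emb n).out) = emb n := by
    intro n
    show QuotientAddGroup.mk' K _ = _
    rw [QuotientAddGroup.coe_mk']
    exact QuotientAddGroup.out_eq' _
  refine Infinite.of_injective (fun n : ℕ => (⟨qmk K ((emb n).out), hmem n⟩ : ↥(lay (chain g) β)))
    fun n m hnm => ?_
  have := congrArg (Subtype.val) hnm
  simp only at this
  rw [hout n, hout m] at this
  exact emb.injective this

theorem lay_chain_eq_one (hg : ∀ x : G, ∃ β < γ.ord, g β = x) {β : Ordinal.{u}}
    (hβ : γ.ord ≤ β) : #↥(lay (chain g) β) = 1 := by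
  have htop : chain g β = ⊤ := chain_top γ g hg hβ
  have hsub : Subsingleton (G ⧸ chain g β) := by
    rw [htop]
    exact QuotientAddGroup.subsingleton_quotient_top
  have : Subsingleton ↥(lay (chain g) β) := ⟨fun a b => Subtype.ext (hsub.allEq a.1 b.1)⟩
  have hne : Nonempty ↥(lay (chain g) β) := ⟨0⟩
  exact Cardinal.mk_eq_one _

theorem exists_goodchain (hγ : ℵ₀ < γ) (hG : #G = γ) :
    ∃ A : Ordinal.{u} → AddSubgroup G, Monotone A ∧ ChainEx A ∧ ChainDesc A ∧
      (∀ β, #↥(lay A β) = if β < γ.ord then ℵ₀ else 1) := by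
  have hcard : #(γ.ord.ToType) = #G := by rw [Cardinal.mk_ord_toType, hG]
  obtain ⟨eqv⟩ : Nonempty (γ.ord.ToType ≃ G) := Cardinal.eq.mp hcard
  set g : Ordinal.{u} → G := fun β =>
    if h : β < γ.ord then eqv ((@Ordinal.ToType.mk γ.ord) ⟨β, h⟩) else 0 with hgdef
  have hg : ∀ x : G, ∃ β < γ.ord, g β = x := by
    intro x
    refine ⟨((@Ordinal.ToType.mk γ.ord).symm (eqv.symm x)).1,
      ((@Ordinal.ToType.mk γ.ord).symm (eqv.symm x)).2, ?_⟩
    have hmem : ((@Ordinal.ToType.mk γ.ord).symm (eqv.symm x)).1 < γ.ord :=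
      ((@Ordinal.ToType.mk γ.ord).symm (eqv.symm x)).2
    rw [hgdef]
    dsimp only
    rw [dif_pos hmem]
    exact (congrArg eqv (OrderIso.apply_symm_apply _ _)).trans (Equiv.apply_symm_apply _ _)
  refine ⟨chain g, chain_mono g, chainEx_chain γ g hg, chain_desc g, fun β => ?_⟩
  split_ifs with h
  · exact lay_chain_eq_aleph0 γ g hγ hG hg h
  · exact lay_chain_eq_one γ g hg (le_of_not_gt h)

end layers



open Pointwise

theorem abelian_groups_asymorphic' (γ κ : Cardinal.{u})
    (hγ : ℵ₀ < γ) (hκ : ℵ₀ < κ) (_hκγ : κ ≤ γ)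
    (G : Type u) [AddCommGroup G] (hG : #G = γ)
    (H : Type u) [AddCommGroup H] (hH : #H = γ) :
    ∃ f : G ≃ H, IsAddAsymorphism κ f := by
  classical
  obtain ⟨A, hMonoA, hExA, hDescA, hlayA⟩ := exists_goodchain (G := G) γ hγ hG
  obtain ⟨B, hMonoB, hExB, hDescB, hlayB⟩ := exists_goodchain (G := H) γ hγ hH
  have hcardeq : ∀ β, #↥(lay A β) = #↥(lay B β) := fun β => by rw [hlayA β, hlayB β]
  have he : ∀ β, Nonempty (↥(lay A β) ≃ ↥(lay B β)) := fun β => Cardinal.eq.mp (hcardeq β)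
  set e : ∀ β, ↥(lay A β) ≃ ↥(lay B β) := fun β =>
    (Classical.choice (he β)).trans (Equiv.swap ((Classical.choice (he β)) 0) 0) with hedef
  have he0 : ∀ β, e β 0 = 0 := fun β => by
    rw [hedef]
    simp only [Equiv.trans_apply, Equiv.swap_apply_left]
  have he0' : ∀ β, (e β).symm 0 = 0 := fun β => by
    rw [← he0 β, Equiv.symm_apply_apply]
  have hlayAc : ∀ β, Countable ↥(lay A β) := fun β => by
    rw [← Cardinal.mk_le_aleph0_iff, hlayA β]
    split_ifs
    · exact le_rfl
    · exact le_of_lt Cardinal.one_lt_aleph0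
  have hlayBc : ∀ β, Countable ↥(lay B β) := fun β => by
    rw [← Cardinal.mk_le_aleph0_iff, hlayB β]
    split_ifs
    · exact le_rfl
    · exact le_of_lt Cardinal.one_lt_aleph0
  set F := amap A B e hExA hDescA with hFdef
  set Finv := amap B A (fun β => (e β).symm) hExB hDescB with hFinvdef
  have hee : (fun β => ((e β).symm).symm) = e := funext fun β => Equiv.symm_symm (e β)
  have hsymm2 : amap A B (fun β => ((e β).symm).symm) hExA hDescA = F := by
    rw [hFdef]
    exact congrArg (fun ee => amap A B ee hExA hDescA) hee
  have hleft : ∀ x, Finv (F x) = x := fun x =>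
    bmap_amap A B e hExA hDescA hMonoA hMonoB he0 hExB hDescB x
  have hright : ∀ y, F (Finv y) = y := by
    intro y
    have h := bmap_amap B A (fun β => (e β).symm) hExB hDescB hMonoB hMonoA he0' hExA hDescA y
    rwa [hsymm2] at h
  refine ⟨⟨F, Finv, hleft, hright⟩, ?_⟩
  intro X Y hX hY
  refine ⟨⋃ b ∈ Y, Dset B A (fun β => (e β).symm) hExB hDescB b,
    ⋃ a ∈ X, Dset A B e hExA hDescA a, ?_, ?_, ?_, ?_⟩
  · calc #(⋃ b ∈ Y, Dset B A (fun β => (e β).symm) hExB hDescB b)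
        ≤ #Y * ⨆ b : Y, #(Dset B A (fun β => (e β).symm) hExB hDescB b.1) :=
          Cardinal.mk_biUnion_le _ _
      _ ≤ #Y * ℵ₀ := by
          refine mul_le_mul_right (ciSup_le' fun b => ?_) _
          exact (countable_Dset B A (fun β => (e β).symm) hExB hDescB hMonoB he0'
            hlayBc hlayAc b.1).le_aleph0
      _ < κ := Cardinal.mul_lt_of_lt hκ.le hY hκ
  · calc #(⋃ a ∈ X, Dset A B e hExA hDescA a)
        ≤ #X * ⨆ a : X, #(Dset A B e hExA hDescA a.1) := Cardinal.mk_biUnion_le _ _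
      _ ≤ #X * ℵ₀ := by
          refine mul_le_mul_right (ciSup_le' fun a => ?_) _
          exact (countable_Dset A B e hExA hDescA hMonoA he0 hlayAc hlayBc a.1).le_aleph0
      _ < κ := Cardinal.mul_lt_of_lt hκ.le hX hκ
  · intro x z hz
    obtain ⟨w, hw, rfl⟩ := hz
    obtain ⟨a, ha, x', hx', rfl⟩ := Set.mem_add.mp hw
    rw [Set.mem_singleton_iff] at hx'
    subst hx'
    refine Set.mem_add.mpr ⟨F (x' + a) - F x', ?_, F x', Set.mem_singleton _, ?_⟩
    · exact Set.mem_biUnion ha ⟨x', rfl⟩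
    · show F (x' + a) - F x' + F x' = _
      rw [sub_add_cancel, add_comm a x']
      rfl
  · intro y z hz
    obtain ⟨w, hw, rfl⟩ := hz
    obtain ⟨b, hb, y', hy', rfl⟩ := Set.mem_add.mp hw
    rw [Set.mem_singleton_iff] at hy'
    subst hy'
    refine Set.mem_add.mpr ⟨Finv (y' + b) - Finv y', ?_, Finv y', Set.mem_singleton _, ?_⟩
    · exact Set.mem_biUnion hb ⟨y', rfl⟩
    · show Finv (y' + b) - Finv y' + Finv y' = _
      rw [sub_add_cancel, add_comm b y']
      rfl

end AsymProof

/-- Any two Abelian groups of the same uncountable cardinality `γ` are `κ`-asymorphic,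
for any cardinal `κ` with `ℵ₀ < κ ≤ γ`. -/
theorem abelian_groups_asymorphic (γ κ : Cardinal.{u})
    (hγ : ℵ₀ < γ) (hκ : ℵ₀ < κ) (hκγ : κ ≤ γ)
    (G : Type u) [AddCommGroup G] (hG : #G = γ)
    (H : Type u) [AddCommGroup H] (hH : #H = γ) :
    ∃ f : G ≃ H, IsAddAsymorphism κ f :=
  AsymProof.abelian_groups_asymorphic' γ κ hγ hκ hκγ G hG H hH
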